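/- Let n > 1 be an odd integer that is not prime. Then the unitary Cayley graph G_{ℤ/nℤ} has diameter 2: it is not complete, and any two distinct vertices have a common neighbor. -/

import Mathlib

/-- The unitary Cayley graph of a commutative ring: `a` is adjacent to `b`
iff `a ≠ b` and `a - b` is a unit. -/
def unitaryCayley (X : Type*) [CommRing X] : SimpleGraph X where
  Adj a b := a ≠ b ∧ IsUnit (a - b)
  symm := by
    constructor
    rintro a b ⟨h1, h2⟩
    exact ⟨h1.symm, neg_sub a b ▸ h2.neg⟩
  loopless := by constructor; rintro a ⟨h, _⟩; exact h rfl

/-- In `ZMod (p^k)` with `p` an odd prime, every element is a sum of two units. -/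
lemma sum_two_units_prime_pow (p k : ℕ) (hp : p.Prime) (hk : 0 < k) (hpo : Odd p)
    (d : ZMod (p ^ k)) : ∃ u v : ZMod (p ^ k), IsUnit u ∧ IsUnit v ∧ u + v = d := by
  haveI : Fact p.Prime := ⟨hp⟩
  haveI : NeZero (p ^ k) := ⟨pow_ne_zero _ hp.pos.ne'⟩
  have hdvd : p ∣ p ^ k := dvd_pow_self p hk.ne'
  set f : ZMod (p ^ k) →+* ZMod p := ZMod.castHom hdvd (ZMod p)
  -- key criterion: unit iff image mod p is nonzero
  have key : ∀ x : ZMod (p ^ k), f x ≠ 0 → IsUnit x := by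
    intro x hx
    have hxv : (x.val : ZMod (p ^ k)) = x := ZMod.natCast_zmod_val x
    rw [← hxv]
    rw [ZMod.isUnit_iff_coprime, Nat.coprime_pow_right_iff hk, Nat.coprime_comm,
      hp.coprime_iff_not_dvd]
    intro hdvd'
    apply hx
    have : f x = ((x.val : ℕ) : ZMod p) := by
      rw [ZMod.castHom_apply, ← ZMod.natCast_val]
    rw [this, ZMod.natCast_eq_zero_iff]
    exact hdvd'
  -- find w : ZMod p with w ≠ 0 and w ≠ f d
  have hcard : ({0, f d} : Finset (ZMod p)).card < Fintype.card (ZMod p) := by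
    have h1 : ({0, f d} : Finset (ZMod p)).card ≤ 2 :=
      (Finset.card_insert_le _ _).trans (by simp)
    have h2 : 3 ≤ p := by
      have := hp.two_le
      obtain ⟨m, hm⟩ := hpo
      omega
    rw [ZMod.card]
    omega
  have hne : ({0, f d} : Finset (ZMod p)) ≠ Finset.univ := by
    intro h
    rw [h, Finset.card_univ] at hcard
    exact lt_irrefl _ hcard
  obtain ⟨w, -, hw⟩ := Finset.exists_of_ssubset (Finset.ssubset_univ_iff.mpr hne)
  have hw0 : w ≠ 0 := fun h => hw (by simp [h])
  have hwd : w ≠ f d := fun h => hw (by simp [h])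
  -- lift w
  set u : ZMod (p ^ k) := ((w.val : ℕ) : ZMod (p ^ k))
  have hfu : f u = w := by
    simp only [u, map_natCast, ZMod.natCast_zmod_val]
  refine ⟨u, d - u, key u (by rw [hfu]; exact hw0), key _ ?_, by ring⟩
  rw [map_sub, hfu]
  intro h
  exact hwd (by rw [← sub_eq_zero]; rw [sub_eq_zero] at h ⊢; exact h.symm ▸ rfl)

/-- In `ZMod n` with `n` odd, every element is a sum of two units. -/
lemma sum_two_units (n : ℕ) (hodd : Odd n) :
    ∀ d : ZMod n, ∃ u v : ZMod n, IsUnit u ∧ IsUnit v ∧ u + v = d := by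
  induction n using Nat.recOnPosPrimePosCoprime with
  | prime_pow p k hp hk =>
    intro d
    have hpo : Odd p := by
      rcases hp.eq_two_or_odd' with h | h
      · exfalso
        rw [h] at hodd
        exact (Nat.not_even_iff_odd.mpr hodd) (Nat.even_pow.mpr ⟨even_two, hk.ne'⟩)
      · exact h
    exact sum_two_units_prime_pow p k hp hk hpo d
  | zero => exact absurd hodd (by simp)
  | one =>
    intro d
    exact ⟨0, 0, isUnit_of_subsingleton 0, isUnit_of_subsingleton 0, Subsingleton.elim _ _⟩
  | coprime a b ha hb hab iha ihb =>
    intro d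
    have hoa : Odd a := (Nat.Odd.of_mul_left hodd)
    have hob : Odd b := (Nat.Odd.of_mul_right hodd)
    set e := ZMod.chineseRemainder hab
    obtain ⟨u1, v1, hu1, hv1, huv1⟩ := iha hoa (e d).1
    obtain ⟨u2, v2, hu2, hv2, huv2⟩ := ihb hob (e d).2
    refine ⟨e.symm (u1, u2), e.symm (v1, v2), ?_, ?_, ?_⟩
    · obtain ⟨x1, hx1⟩ := hu1.exists_right_inv
      obtain ⟨x2, hx2⟩ := hu2.exists_right_inv
      exact IsUnit.of_mul_eq_one (e.symm (x1, x2)) (by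
        rw [← map_mul, Prod.mk_mul_mk, hx1, hx2,
          show ((1 : ZMod a), (1 : ZMod b)) = 1 from rfl, map_one])
    · obtain ⟨x1, hx1⟩ := hv1.exists_right_inv
      obtain ⟨x2, hx2⟩ := hv2.exists_right_inv
      exact IsUnit.of_mul_eq_one (e.symm (x1, x2)) (by
        rw [← map_mul, Prod.mk_mul_mk, hx1, hx2,
          show ((1 : ZMod a), (1 : ZMod b)) = 1 from rfl, map_one])
    · rw [← map_add, Prod.mk_add_mk, huv1, huv2,
        show ((e d).1, (e d).2) = e d from rfl, RingEquiv.symm_apply_apply]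

theorem unitaryCayley_diameter_two (n : ℕ) (hn : 1 < n) (hodd : Odd n)
    (hnp : ¬ n.Prime) :
    (∃ a b : ZMod n, a ≠ b ∧ ¬ (unitaryCayley (ZMod n)).Adj a b) ∧
      ∀ a b : ZMod n, a ≠ b →
        ∃ c, (unitaryCayley (ZMod n)).Adj a c ∧ (unitaryCayley (ZMod n)).Adj c b := by
  haveI : NeZero n := ⟨by omega⟩
  haveI : Fact (1 < n) := ⟨hn⟩
  constructor
  · -- not complete: take p = minFac n and 0
    set p := n.minFac
    have hpp : p.Prime := Nat.minFac_prime (by omega)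
    have hpdvd : p ∣ n := Nat.minFac_dvd n
    have hplt : p < n := by
      rcases lt_or_eq_of_le (Nat.le_of_dvd (by omega) hpdvd) with h | h
      · exact h
      · exact absurd (h ▸ hpp) hnp
    refine ⟨(p : ZMod n), 0, ?_, ?_⟩
    · intro h
      rw [ZMod.natCast_eq_zero_iff] at h
      have := Nat.le_of_dvd hpp.pos h
      omega
    · rintro ⟨-, hu⟩
      rw [sub_zero, ZMod.isUnit_iff_coprime, Nat.Prime.coprime_iff_not_dvd hpp] at hu
      exact hu hpdvd
  · intro a b hab
    obtain ⟨u, v, hu, hv, huv⟩ := sum_two_units n hodd (a - b)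
    refine ⟨a - u, ⟨?_, by simpa using hu⟩, ⟨?_, ?_⟩⟩
    · intro h
      have hu0 : u = 0 := by linear_combination h
      exact (hu0 ▸ hu).ne_zero rfl
    · intro h
      have hv0 : v = 0 := by linear_combination huv + h
      exact (hv0 ▸ hv).ne_zero rfl
    · have : a - u - b = v := by linear_combination -huv
      rw [this]; exact hv
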